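/- Let d ≥ 1, β > 0, and λ > 0. Define the annulus A_{λ,β} = {ξ ∈ ℝ^d : | |ξ| − √λ | ≤ λ^{−β/2}}. For every ε > 0, set L = 3^{1+β} C_d' / (ε ω_d) (where C_d' is a dimensional constant bounding spherical cap areas and ω_d is the volume of the unit ball), and define ρ̃(x) = min(L, L^{1+β} |x|^{−β}). Then there exists λ₀ = (2L+1)² such that for all λ ≥ λ₀ and all x ∈ ℝ^d, |A_{λ,β} ∩ B(x, ρ̃(x))| ≤ ε |B(x, ρ̃(x))|. -/

import Mathlib

open MeasureTheory Metric Set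
open scoped RealInnerProductSpace

section Aux

variable {d : ℕ}

local notation "E" => EuclideanSpace ℝ (Fin d)

/-- Key algebraic identity relating the distance of normalized vectors to the distance
of the vectors. -/
lemma aux_ident (u v : EuclideanSpace ℝ (Fin d)) (hu : u ≠ 0) (hv : v ≠ 0) :
    ‖u‖ * ‖v‖ * ‖‖u‖⁻¹ • u - ‖v‖⁻¹ • v‖ ^ 2 = ‖u - v‖ ^ 2 - (‖u‖ - ‖v‖) ^ 2 := by
  have hu' : ‖u‖ ≠ 0 := norm_ne_zero_iff.2 hu
  have hv' : ‖v‖ ≠ 0 := norm_ne_zero_iff.2 hv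
  have h1 : ‖‖u‖⁻¹ • u - ‖v‖⁻¹ • v‖ ^ 2
      = ‖‖u‖⁻¹ • u‖ ^ 2 - 2 * (‖u‖⁻¹ * (‖v‖⁻¹ * (inner ℝ u v : ℝ))) + ‖‖v‖⁻¹ • v‖ ^ 2 := by
    rw [norm_sub_sq_real, real_inner_smul_left, real_inner_smul_right]
  have h2 : ‖u - v‖ ^ 2 = ‖u‖ ^ 2 - 2 * (inner ℝ u v : ℝ) + ‖v‖ ^ 2 := norm_sub_sq_real u v
  have h3 : ‖‖u‖⁻¹ • u‖ = 1 := by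
    rw [norm_smul, norm_inv, norm_norm, inv_mul_cancel₀ hu']
  have h4 : ‖‖v‖⁻¹ • v‖ = 1 := by
    rw [norm_smul, norm_inv, norm_norm, inv_mul_cancel₀ hv']
  rw [h1, h2, h3, h4]
  field_simp
  ring

/-- Upper bound for the weighted radial measure of the preimage of `Icc a b`. -/
lemma aux_volumeIoiPow_le (n : ℕ) (a b : ℝ) (ha : 0 < a) (hab : a ≤ b) :
    Measure.volumeIoiPow n ((Subtype.val : Ioi (0:ℝ) → ℝ) ⁻¹' Icc a b)
      ≤ ENNReal.ofReal (b ^ n) * ENNReal.ofReal (b - a) := by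
  have hs : MeasurableSet ((Subtype.val : Ioi (0:ℝ) → ℝ) ⁻¹' Icc a b) :=
    measurable_subtype_coe measurableSet_Icc
  rw [Measure.volumeIoiPow, withDensity_apply _ hs]
  calc ∫⁻ r in (Subtype.val : Ioi (0:ℝ) → ℝ) ⁻¹' Icc a b, ENNReal.ofReal (r.1 ^ n)
        ∂(volume.comap Subtype.val)
      ≤ ∫⁻ _ in (Subtype.val : Ioi (0:ℝ) → ℝ) ⁻¹' Icc a b, ENNReal.ofReal (b ^ n)
        ∂(volume.comap Subtype.val) := by
        refine setLIntegral_mono' hs fun r hr => ?_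
        exact ENNReal.ofReal_le_ofReal (pow_le_pow_left₀ r.2.out.le hr.2 n)
    _ = ENNReal.ofReal (b ^ n) *
        (volume.comap Subtype.val) ((Subtype.val : Ioi (0:ℝ) → ℝ) ⁻¹' Icc a b) :=
        setLIntegral_const _ _
    _ ≤ ENNReal.ofReal (b ^ n) * ENNReal.ofReal (b - a) := by
        gcongr
        rw [comap_subtype_coe_apply measurableSet_Ioi,
          Subtype.image_preimage_coe]
        calc volume (Ioi (0:ℝ) ∩ Icc a b) ≤ volume (Icc a b) :=
              measure_mono inter_subset_right
          _ = ENNReal.ofReal (b - a) := Real.volume_Icc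

end Aux

set_option maxHeartbeats 2000000 in
/-- Thinness of the annulus `A_{λ,β} = {ξ : ||ξ| − √λ| ≤ λ^{−β/2}}` with respect to the
decaying density `ρ̃(x) = min(L, L^{1+β}|x|^{−β})`, `L = 3^{1+β} C_d' / (ε ω_d)`, for
`λ ≥ λ₀ = (2L+1)²`. Here `C_d'` is a dimensional constant bounding spherical cap areas
and `ω_d` is the volume of the unit ball. -/
theorem stmt3 (d : ℕ) (hd : 1 ≤ d) (β : ℝ) (hβ : 0 < β)
    (Cd' : ℝ) (hCd' : 0 < Cd')
    (hcap : ∀ (ω₀ : sphere (0 : EuclideanSpace ℝ (Fin d)) 1) (δ : ℝ), 0 < δ →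
      (volume : Measure (EuclideanSpace ℝ (Fin d))).toSphere
          {ω : sphere (0 : EuclideanSpace ℝ (Fin d)) 1 | ‖(ω : EuclideanSpace ℝ (Fin d)) - ω₀‖ < δ}
        ≤ ENNReal.ofReal (Cd' / 2 ^ (d - 1) * δ ^ (d - 1)))
    (ωd : ℝ) (hωd : ωd = (volume (ball (0 : EuclideanSpace ℝ (Fin d)) 1)).toReal)
    (ε : ℝ) (hε : 0 < ε)
    (L : ℝ) (hL : L = 3 ^ (1 + β) * Cd' / (ε * ωd))
    (ρ : EuclideanSpace ℝ (Fin d) → ℝ)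
    (hρ : ∀ x, ρ x = min L (L ^ (1 + β) * ‖x‖ ^ (-β))) :
    ∃ lam₀ : ℝ, lam₀ = (2 * L + 1) ^ 2 ∧
      ∀ lam : ℝ, lam₀ ≤ lam → ∀ x : EuclideanSpace ℝ (Fin d),
        volume ({ξ : EuclideanSpace ℝ (Fin d) | |‖ξ‖ - Real.sqrt lam| ≤ lam ^ (-(β / 2))}
            ∩ ball x (ρ x))
          ≤ ENNReal.ofReal ε * volume (ball x (ρ x)) := by
  classical
  have hωd_pos : 0 < ωd := by
    rw [hωd]
    exact ENNReal.toReal_pos (ne_of_gt (measure_ball_pos _ _ one_pos)) measure_ball_lt_top.ne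
  have hεωd : (0:ℝ) < ε * ωd := mul_pos hε hωd_pos
  have hLmul : L * (ε * ωd) = 3 ^ (1 + β) * Cd' := by
    rw [hL]; field_simp
  have h3β : (3:ℝ) ≤ 3 ^ (1 + β) := by
    calc (3:ℝ) = 3 ^ (1:ℝ) := (Real.rpow_one 3).symm
      _ ≤ 3 ^ (1 + β) := Real.rpow_le_rpow_of_exponent_le (by norm_num) (by linarith)
  have hLpos : 0 < L := by nlinarith
  refine ⟨(2*L+1)^2, rfl, ?_⟩
  intro lam hlam x
  rcases le_or_gt 1 ε with hε1 | hε1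
  · calc volume ({ξ : EuclideanSpace ℝ (Fin d) | |‖ξ‖ - Real.sqrt lam| ≤ lam ^ (-(β / 2))}
            ∩ ball x (ρ x))
        ≤ volume (ball x (ρ x)) := measure_mono inter_subset_right
      _ = 1 * volume (ball x (ρ x)) := (one_mul _).symm
      _ ≤ ENNReal.ofReal ε * volume (ball x (ρ x)) :=
          mul_le_mul_left (ENNReal.one_le_ofReal.2 hε1) _
  rcases Set.eq_empty_or_nonempty
      ({ξ : EuclideanSpace ℝ (Fin d) | |‖ξ‖ - Real.sqrt lam| ≤ lam ^ (-(β / 2))}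
        ∩ ball x (ρ x)) with hemp | ⟨ξ₀, hξ₀A, hξ₀B⟩
  · rw [hemp]; simp
  -- setup
  haveI hNT : Nontrivial (EuclideanSpace ℝ (Fin d)) :=
    Module.nontrivial_of_finrank_pos (R := ℝ) (by rw [finrank_euclideanSpace_fin]; omega)
  have hdim : Module.finrank ℝ (EuclideanSpace ℝ (Fin d)) = d := finrank_euclideanSpace_fin
  -- lower bound on Cd'
  obtain ⟨z, hz⟩ : ∃ z : EuclideanSpace ℝ (Fin d), ‖z‖ = 1 :=
    ⟨EuclideanSpace.single (⟨0, by omega⟩ : Fin d) (1:ℝ), by simp [EuclideanSpace.norm_single]⟩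
  have hCdlb : (d:ℝ) * ωd ≤ 2 * Cd' := by
    set ω₀ : sphere (0 : EuclideanSpace ℝ (Fin d)) 1 := ⟨z, by simp [hz]⟩
    set ω₁ : sphere (0 : EuclideanSpace ℝ (Fin d)) 1 := ⟨-z, by simp [hz]⟩
    have hcover : (univ : Set (sphere (0 : EuclideanSpace ℝ (Fin d)) 1)) ⊆
        {ω | ‖(ω : EuclideanSpace ℝ (Fin d)) - ω₀‖ < 2} ∪
          {ω | ‖(ω : EuclideanSpace ℝ (Fin d)) - ω₁‖ < 2} := by
      intro ω _
      have hω : ‖(ω : EuclideanSpace ℝ (Fin d))‖ = 1 := by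
        have := ω.2; rwa [mem_sphere_zero_iff_norm] at this
      by_contra hcon
      simp only [mem_union, mem_setOf_eq, not_or, not_lt] at hcon
      have h1 : ‖(ω : EuclideanSpace ℝ (Fin d)) - z‖ ^ 2
          + ‖(ω : EuclideanSpace ℝ (Fin d)) + z‖ ^ 2 = 4 := by
        rw [norm_sub_sq_real, norm_add_sq_real, hω, hz]; ring
      have h2 : (2:ℝ) ≤ ‖(ω : EuclideanSpace ℝ (Fin d)) - z‖ := hcon.1
      have h3 : (2:ℝ) ≤ ‖(ω : EuclideanSpace ℝ (Fin d)) + z‖ := by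
        have h4 := hcon.2
        rwa [sub_neg_eq_add] at h4
      nlinarith [norm_nonneg ((ω : EuclideanSpace ℝ (Fin d)) - z),
        norm_nonneg ((ω : EuclideanSpace ℝ (Fin d)) + z)]
    have hmeas : (volume : Measure (EuclideanSpace ℝ (Fin d))).toSphere univ
        ≤ ENNReal.ofReal Cd' + ENNReal.ofReal Cd' := by
      have h2pow : Cd' / 2 ^ (d-1) * 2 ^ (d-1) = Cd' :=
        div_mul_cancel₀ _ (pow_ne_zero _ (two_ne_zero))
      calc (volume : Measure (EuclideanSpace ℝ (Fin d))).toSphere univ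
          ≤ (volume : Measure (EuclideanSpace ℝ (Fin d))).toSphere
              ({ω | ‖(ω : EuclideanSpace ℝ (Fin d)) - ω₀‖ < 2} ∪
                {ω | ‖(ω : EuclideanSpace ℝ (Fin d)) - ω₁‖ < 2}) := measure_mono hcover
        _ ≤ _ + _ := measure_union_le _ _
        _ ≤ ENNReal.ofReal Cd' + ENNReal.ofReal Cd' := by
            refine add_le_add ?_ ?_
            · simpa [h2pow] using hcap ω₀ 2 two_pos
            · simpa [h2pow] using hcap ω₁ 2 two_pos
    rw [Measure.toSphere_apply_univ, hdim] at hmeas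
    have hball : volume (ball (0 : EuclideanSpace ℝ (Fin d)) 1) = ENNReal.ofReal ωd := by
      rw [hωd, ENNReal.ofReal_toReal measure_ball_lt_top.ne]
    rw [hball, ← ENNReal.ofReal_natCast d, ← ENNReal.ofReal_mul (by positivity),
      ← ENNReal.ofReal_add hCd'.le hCd'.le] at hmeas
    have := (ENNReal.ofReal_le_ofReal_iff (by positivity)).1 hmeas
    linarith
  have hL32 : 3 / 2 * (d:ℝ) ≤ L := by
    have hd1 : (1:ℝ) ≤ (d:ℝ) := by exact_mod_cast hd
    nlinarith [mul_le_mul_of_nonneg_left hε1.le (mul_pos hLpos hωd_pos).le]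
  have hL1 : (3:ℝ)/2 ≤ L := by
    have hd1 : (1:ℝ) ≤ (d:ℝ) := by exact_mod_cast hd
    nlinarith
  -- basic facts about lam
  set s := Real.sqrt lam with hs_def
  set δ := lam ^ (-(β/2)) with hδ_def
  have hlam0 : (0:ℝ) < lam := by nlinarith
  have hlam1 : (1:ℝ) ≤ lam := by nlinarith
  have hδs : δ = s ^ (-β) := by
    rw [hδ_def, hs_def, Real.sqrt_eq_rpow, ← Real.rpow_mul hlam0.le]
    ring_nf
  clear_value s δ
  have hsL : 2*L + 1 ≤ s := by
    rw [hs_def]; exact (Real.le_sqrt (by linarith) (by linarith)).2 hlam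
  have hδpos : 0 < δ := by rw [hδ_def]; exact Real.rpow_pos_of_pos hlam0 _
  have hδ1 : δ ≤ 1 := by
    rw [hδ_def]; exact Real.rpow_le_one_of_one_le_of_nonpos hlam1 (by linarith)
  -- facts about x and ρ x
  have hξ₀r : ‖ξ₀ - x‖ < ρ x := by rwa [← dist_eq_norm, ← mem_ball]
  have hrpos : 0 < ρ x := lt_of_le_of_lt (norm_nonneg _) hξ₀r
  have hrL : ρ x ≤ L := by rw [hρ]; exact min_le_left _ _
  have hξ₀A' : |‖ξ₀‖ - s| ≤ δ := hξ₀A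
  have hξ₀n := abs_le.1 hξ₀A'
  have hxlow : s - δ - ρ x ≤ ‖x‖ := by
    have h1 : ‖ξ₀‖ - ‖x‖ ≤ ‖ξ₀ - x‖ := norm_sub_norm_le _ _
    linarith [hξ₀n.1]
  have hxup : ‖x‖ ≤ 2 * s := by
    have h1 : ‖x‖ - ‖ξ₀‖ ≤ ‖x - ξ₀‖ := norm_sub_norm_le _ _
    rw [norm_sub_rev] at h1
    linarith [hξ₀n.2]
  have hxL : L ≤ ‖x‖ := by linarith
  have hxpos : 0 < ‖x‖ := lt_of_lt_of_le hLpos hxL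
  have hx0 : x ≠ 0 := norm_pos_iff.1 hxpos
  have hrval : ρ x = L ^ (1+β) * ‖x‖ ^ (-β) := by
    rw [hρ]
    refine min_eq_right ?_
    have h1 : ‖x‖ ^ (-β) ≤ L ^ (-β) :=
      Real.rpow_le_rpow_of_nonpos hLpos hxL (by linarith)
    calc L ^ (1+β) * ‖x‖ ^ (-β) ≤ L ^ (1+β) * L ^ (-β) :=
          mul_le_mul_of_nonneg_left h1 (Real.rpow_nonneg hLpos.le _)
      _ = L := by
          rw [← Real.rpow_add hLpos]
          norm_num
  have hrlow : L ^ (1+β) * ((2:ℝ) ^ (-β) * δ) ≤ ρ x := by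
    rw [hrval, hδs]
    have h2s : ((2:ℝ)*s) ^ (-β) = (2:ℝ) ^ (-β) * s ^ (-β) :=
      Real.mul_rpow (by norm_num) (by linarith : (0:ℝ) ≤ s)
    have h1 : ((2:ℝ)*s) ^ (-β) ≤ ‖x‖ ^ (-β) :=
      Real.rpow_le_rpow_of_nonpos hxpos hxup (by linarith)
    rw [← h2s]
    exact mul_le_mul_of_nonneg_left h1 (Real.rpow_nonneg hLpos.le _)
  have key3 : 2 * (Cd' * δ) ≤ ε * ωd * ρ x := by
    have hLsplit : L ^ ((1:ℝ)+β) = L * L ^ β := by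
      rw [Real.rpow_add hLpos, Real.rpow_one]
    have e1 : ε * ωd * (L ^ ((1:ℝ)+β) * ((2:ℝ) ^ (-β) * δ))
        = 3 ^ (1+β) * Cd' * (L ^ β * ((2:ℝ) ^ (-β) * δ)) := by
      rw [hLsplit, ← hLmul]; ring
    have e2 : (3:ℝ) ^ (1+β) * (L ^ β * (2:ℝ) ^ (-β)) = 3 * (3*L/2) ^ β := by
      rw [show ((3:ℝ)*L/2) ^ β = ((3:ℝ)^β * L^β) * ((2:ℝ)^β)⁻¹ by
            rw [← Real.mul_rpow (by norm_num) hLpos.le, Real.div_rpow (by positivity) (by norm_num)]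
            rw [div_eq_mul_inv],
          Real.rpow_add (by norm_num : (0:ℝ) < 3), Real.rpow_one,
          Real.rpow_neg (by norm_num : (0:ℝ) ≤ 2)]
      ring
    have e3 : (1:ℝ) ≤ (3*L/2) ^ β := Real.one_le_rpow (by linarith) hβ.le
    have e4 : ε * ωd * (L ^ ((1:ℝ)+β) * ((2:ℝ) ^ (-β) * δ)) ≤ ε * ωd * ρ x :=
      mul_le_mul_of_nonneg_left hrlow hεωd.le
    have e5 : 3 * Cd' * δ ≤ 3 ^ (1+β) * Cd' * (L ^ β * ((2:ℝ) ^ (-β) * δ)) := by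
      have : 3 ^ (1+β) * Cd' * (L ^ β * ((2:ℝ) ^ (-β) * δ))
          = (3 * (3*L/2) ^ β) * (Cd' * δ) := by rw [← e2]; ring
      rw [this]
      have h36 : (3:ℝ) ≤ 3 * (3*L/2) ^ β := by linarith
      have := mul_le_mul_of_nonneg_right h36 (mul_pos hCd' hδpos).le
      linarith
    have hpos := mul_pos hCd' hδpos
    linarith [e1, e4, e5]
  -- geometry
  set aa := s - δ with haa_def
  set bb := s + δ with hbb_def
  set cc := s - δ - ρ x with hcc_def
  clear_value aa bb cc
  have haa : 0 < aa := by simp only [haa_def]; linarith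
  have hccL : L ≤ cc := by simp only [hcc_def]; linarith
  have hcc : 0 < cc := lt_of_lt_of_le hLpos hccL
  have hacpos : 0 < aa * cc := mul_pos haa hcc
  have hsqrtpos : 0 < Real.sqrt (aa*cc) := Real.sqrt_pos.2 hacpos
  set Δ := ρ x / Real.sqrt (aa*cc) with hΔ_def
  clear_value Δ
  have hΔpos : 0 < Δ := by rw [hΔ_def]; exact div_pos hrpos hsqrtpos
  have hkey1 : Δ ^ (d-1) * bb ^ (d-1) ≤ 2 ^ (d-1) * (ρ x) ^ (d-1) := by
    rcases Nat.lt_or_ge d 2 with hd2 | hd2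
    · have : d = 1 := by omega
      subst this
      simp
    · have hL3 : (3:ℝ) ≤ L := by
        have h2d : (2:ℝ) ≤ (d:ℝ) := by exact_mod_cast hd2
        linarith
      have hbb4 : bb ^ 2 ≤ 4 * (aa * cc) := by
        have q1 : (s + 1) ^ 2 ≤ 4 * ((s-1) * (s-1-L)) := by
          have t0 : 0 ≤ s - 2*L - 1 := by linarith
          have t1 : 0 ≤ (s - 2*L - 1) ^ 2 := sq_nonneg _
          have t2 : 0 ≤ (8*L - 4) * (s - 2*L - 1) :=
            mul_nonneg (by linarith) t0
          have t3 : (2:ℝ) ≤ L - 1 := by linarith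
          have t4 : (4:ℝ) ≤ (L - 1) ^ 2 := by
            have := pow_le_pow_left₀ (by norm_num : (0:ℝ) ≤ 2) t3 2
            norm_num at this
            linarith
          have id1 : 4*((s-1)*(s-1-L)) - (s+1)^2
              = 3*(s-2*L-1)^2 + (8*L-4)*(s-2*L-1) + 4*((L-1)^2 - 2) := by ring
          linarith [t1, t2, t4, id1]
        have q2 : bb ^ 2 ≤ (s + 1) ^ 2 := by
          have hle : bb ≤ s + 1 := by simp only [hbb_def]; linarith
          have hbb0 : 0 ≤ bb := by simp only [hbb_def]; linarith
          exact pow_le_pow_left₀ hbb0 hle 2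
        have q3 : (s-1) * (s-1-L) ≤ aa * cc := by
          have w1 : s - 1 ≤ aa := by simp only [haa_def]; linarith
          have w2 : s - 1 - L ≤ cc := by simp only [hcc_def]; linarith
          have w3 : (0:ℝ) ≤ s - 1 - L := by linarith
          have w4 : (0:ℝ) ≤ aa := haa.le
          exact mul_le_mul w1 w2 w3 w4
        linarith
      have hbb2 : bb ≤ 2 * Real.sqrt (aa*cc) := by
        have h1 : bb/2 ≤ Real.sqrt (aa*cc) := by
          refine (Real.le_sqrt (by simp only [hbb_def]; linarith) hacpos.le).2 ?_
          have : (bb/2)^2 = bb^2/4 := by ring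
          rw [this]
          linarith
        linarith
      have hΔbb : Δ * bb ≤ 2 * ρ x := by
        rw [hΔ_def, div_mul_eq_mul_div, div_le_iff₀ hsqrtpos]
        have := mul_le_mul_of_nonneg_left hbb2 hrpos.le
        linarith
      calc Δ ^ (d-1) * bb ^ (d-1) = (Δ * bb) ^ (d-1) := (mul_pow _ _ _).symm
        _ ≤ (2 * ρ x) ^ (d-1) :=
            pow_le_pow_left₀ (mul_nonneg hΔpos.le (by linarith : (0:ℝ) ≤ bb)) hΔbb _
        _ = 2 ^ (d-1) * (ρ x) ^ (d-1) := mul_pow _ _ _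
  -- the cap and the radial interval
  set ω₀x : sphere (0 : EuclideanSpace ℝ (Fin d)) 1 :=
    ⟨‖x‖⁻¹ • x, by
      rw [mem_sphere_zero_iff_norm, norm_smul, norm_inv, norm_norm,
        inv_mul_cancel₀ (ne_of_gt hxpos)]⟩ with hω₀x_def
  set cap := {ω : sphere (0 : EuclideanSpace ℝ (Fin d)) 1 |
    ‖(ω : EuclideanSpace ℝ (Fin d)) - ω₀x‖ < Δ} with hcap_def
  set J := (Subtype.val : Ioi (0:ℝ) → ℝ) ⁻¹' Icc aa bb with hJ_def
  have hsubset : {ξ : EuclideanSpace ℝ (Fin d) | |‖ξ‖ - s| ≤ δ}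
      ∩ ball x (ρ x) ⊆
      Subtype.val '' ((homeomorphUnitSphereProd (EuclideanSpace ℝ (Fin d))) ⁻¹' (cap ×ˢ J)) := by
    rintro ξ ⟨hξA, hξB⟩
    simp only [mem_setOf_eq] at hξA
    have hξn := abs_le.1 hξA
    have hξa : aa ≤ ‖ξ‖ := by simp only [haa_def]; linarith [hξn.1]
    have hξb : ‖ξ‖ ≤ bb := by simp only [hbb_def]; linarith [hξn.2]
    have hξpos : 0 < ‖ξ‖ := lt_of_lt_of_le haa hξa
    have hξ0 : ξ ≠ 0 := norm_pos_iff.1 hξpos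
    have hξr : ‖ξ - x‖ < ρ x := by rwa [← dist_eq_norm, ← mem_ball]
    refine ⟨⟨ξ, by simpa using hξ0⟩, ?_, rfl⟩
    rw [mem_preimage]
    constructor
    · -- cap membership
      simp only [hcap_def, mem_setOf_eq, homeomorphUnitSphereProd_apply_fst_coe]
      show ‖(‖ξ‖⁻¹ • ξ : EuclideanSpace ℝ (Fin d)) - ‖x‖⁻¹ • x‖ < Δ
      have hident := aux_ident ξ x hξ0 hx0
      have hub : ‖‖ξ‖⁻¹ • ξ - ‖x‖⁻¹ • x‖ ^ 2 * (aa * cc) < (ρ x) ^ 2 := by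
        have h1 : ‖x‖ ≥ cc := by simp only [hcc_def]; linarith
        have h2 : ‖‖ξ‖⁻¹ • ξ - ‖x‖⁻¹ • x‖ ^ 2 * (aa * cc)
            ≤ ‖‖ξ‖⁻¹ • ξ - ‖x‖⁻¹ • x‖ ^ 2 * (‖ξ‖ * ‖x‖) := by
          refine mul_le_mul_of_nonneg_left ?_ (sq_nonneg _)
          exact mul_le_mul hξa h1 hcc.le hξpos.le
        have h3 : ‖‖ξ‖⁻¹ • ξ - ‖x‖⁻¹ • x‖ ^ 2 * (‖ξ‖ * ‖x‖) = ‖ξ - x‖ ^ 2 - (‖ξ‖ - ‖x‖) ^ 2 := by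
          rw [← hident]; ring
        have h4 : ‖ξ - x‖ ^ 2 < (ρ x) ^ 2 :=
          pow_lt_pow_left₀ hξr (norm_nonneg _) (by norm_num)
        have h5 : (0:ℝ) ≤ (‖ξ‖ - ‖x‖) ^ 2 := sq_nonneg _
        linarith
      rw [hΔ_def, lt_div_iff₀ hsqrtpos]
      refine lt_of_pow_lt_pow_left₀ 2 hrpos.le ?_
      rw [mul_pow, Real.sq_sqrt hacpos.le]
      exact hub
    · -- J membership
      simp only [hJ_def, mem_preimage, homeomorphUnitSphereProd_apply_snd_coe]
      show ‖ξ‖ ∈ Icc aa bb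
      exact ⟨hξa, hξb⟩
  -- the measure computation
  have hcapmeas : MeasurableSet cap := by
    rw [hcap_def]
    exact measurableSet_lt ((continuous_subtype_val.sub continuous_const).norm.measurable)
      measurable_const
  have hJmeas : MeasurableSet J := measurable_subtype_coe measurableSet_Icc
  have hmp := (volume : Measure (EuclideanSpace ℝ (Fin d))).measurePreserving_homeomorphUnitSphereProd
  have hfinal : Cd' / 2 ^ (d-1) * Δ ^ (d-1) * (bb ^ (d-1) * (bb - aa))
      ≤ ε * ((ρ x) ^ d * ωd) := by
    have h2pow : (0:ℝ) < 2 ^ (d-1) := by positivity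
    have hba : bb - aa = 2 * δ := by simp only [haa_def, hbb_def]; ring
    have e1 : Cd' / 2 ^ (d-1) * Δ ^ (d-1) * (bb ^ (d-1) * (bb - aa))
        = Cd' / 2 ^ (d-1) * (Δ ^ (d-1) * bb ^ (d-1)) * (2*δ) := by rw [hba]; ring
    have e2 : Cd' / 2 ^ (d-1) * (Δ ^ (d-1) * bb ^ (d-1)) * (2*δ)
        ≤ Cd' / 2 ^ (d-1) * (2 ^ (d-1) * (ρ x) ^ (d-1)) * (2*δ) := by
      refine mul_le_mul_of_nonneg_right (mul_le_mul_of_nonneg_left hkey1 (by positivity)) (by linarith)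
    have e3 : Cd' / 2 ^ (d-1) * (2 ^ (d-1) * (ρ x) ^ (d-1)) * (2*δ)
        = (2 * (Cd' * δ)) * (ρ x) ^ (d-1) := by
      field_simp
    have e4 : (2 * (Cd' * δ)) * (ρ x) ^ (d-1) ≤ (ε * ωd * ρ x) * (ρ x) ^ (d-1) :=
      mul_le_mul_of_nonneg_right key3 (by positivity)
    have e5 : (ε * ωd * ρ x) * (ρ x) ^ (d-1) = ε * ((ρ x) ^ d * ωd) := by
      rw [show (ρ x) ^ d = (ρ x) ^ (d-1) * ρ x by
        rw [← pow_succ, Nat.sub_add_cancel hd]]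
      ring
    linarith
  calc volume ({ξ : EuclideanSpace ℝ (Fin d) | |‖ξ‖ - s| ≤ δ}
        ∩ ball x (ρ x))
      ≤ volume (Subtype.val ''
          ((homeomorphUnitSphereProd (EuclideanSpace ℝ (Fin d))) ⁻¹' (cap ×ˢ J))) :=
        measure_mono hsubset
    _ = (volume.comap Subtype.val)
          ((homeomorphUnitSphereProd (EuclideanSpace ℝ (Fin d))) ⁻¹' (cap ×ˢ J)) :=
        (comap_subtype_coe_apply (measurableSet_singleton 0).compl _ _).symm
    _ = ((volume : Measure (EuclideanSpace ℝ (Fin d))).toSphere.prod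
          (Measure.volumeIoiPow (Module.finrank ℝ (EuclideanSpace ℝ (Fin d)) - 1))) (cap ×ˢ J) :=
        hmp.measure_preimage (hcapmeas.prod hJmeas).nullMeasurableSet
    _ = (volume : Measure (EuclideanSpace ℝ (Fin d))).toSphere cap
          * Measure.volumeIoiPow (d - 1) J := by rw [Measure.prod_prod, hdim]
    _ ≤ ENNReal.ofReal (Cd' / 2 ^ (d-1) * Δ ^ (d-1))
          * (ENNReal.ofReal (bb ^ (d-1)) * ENNReal.ofReal (bb - aa)) :=
        mul_le_mul' (hcap ω₀x Δ hΔpos) (aux_volumeIoiPow_le (d-1) aa bb haa (by simp only [haa_def, hbb_def]; linarith))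
    _ = ENNReal.ofReal (Cd' / 2 ^ (d-1) * Δ ^ (d-1) * (bb ^ (d-1) * (bb - aa))) := by
        have hbb0 : (0:ℝ) ≤ bb := by linarith
        rw [← ENNReal.ofReal_mul (pow_nonneg hbb0 (d-1)),
          ← ENNReal.ofReal_mul
            (mul_nonneg (div_nonneg hCd'.le (by positivity)) (pow_nonneg hΔpos.le (d-1)))]
    _ ≤ ENNReal.ofReal (ε * ((ρ x) ^ d * ωd)) := ENNReal.ofReal_le_ofReal hfinal
    _ = ENNReal.ofReal ε * volume (ball x (ρ x)) := by
        have hball : volume (ball (0 : EuclideanSpace ℝ (Fin d)) 1) = ENNReal.ofReal ωd := by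
          rw [hωd, ENNReal.ofReal_toReal measure_ball_lt_top.ne]
        rw [Measure.addHaar_ball volume x hrpos.le, hdim, hball,
          ← ENNReal.ofReal_mul (by positivity : (0:ℝ) ≤ (ρ x)^d),
          ← ENNReal.ofReal_mul hε.le]
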